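/- Suppose α, β, γ, δ ∈ (0, π), σ = (α+β+γ+δ)/2, and ᾱ = σ−α, β̄ = σ−β, γ̄ = σ−γ, δ̄ = σ−δ. If sin ᾱ, sin β̄, sin γ̄, sin δ̄ are all negative, a contradiction arises; hence if they all have the same sign, it must be positive, i.e., ᾱ, β̄, γ̄, δ̄ ∈ (0, π). -/
import Mathlib


open Real

lemma sin_pos_helper (x : ℝ) (h1 : -Real.pi < x) (h2 : x < 2 * Real.pi)
    (hs : 0 < Real.sin x) : x ∈ Set.Ioo 0 Real.pi := by
  constructor
  · by_contra h
    push_neg at h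
    have : Real.sin x ≤ 0 := by
      have : Real.sin (-x) ≥ 0 := Real.sin_nonneg_of_nonneg_of_le_pi (by linarith) (by linarith)
      rw [Real.sin_neg] at this; linarith
    linarith
  · by_contra h
    push_neg at h
    have : Real.sin x ≤ 0 := by
      have h' : Real.sin (x - Real.pi) ≥ 0 :=
        Real.sin_nonneg_of_nonneg_of_le_pi (by linarith) (by linarith)
      have : Real.sin (x - Real.pi) = -Real.sin x := by
        rw [Real.sin_sub, Real.sin_pi, Real.cos_pi]; ring
      linarith [this ▸ h']
    linarith

lemma sin_neg_helper (x : ℝ) (h1 : -Real.pi < x) (hs : Real.sin x < 0) :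
    x < 0 ∨ Real.pi < x := by
  by_contra h
  push_neg at h
  have : 0 ≤ Real.sin x := Real.sin_nonneg_of_nonneg_of_le_pi h.1 h.2
  linarith

theorem same_sign_implies_positive (α β γ δ : ℝ)
    (hα : α ∈ Set.Ioo 0 Real.pi) (hβ : β ∈ Set.Ioo 0 Real.pi)
    (hγ : γ ∈ Set.Ioo 0 Real.pi) (hδ : δ ∈ Set.Ioo 0 Real.pi)
    (σ : ℝ) (hσ : σ = (α + β + γ + δ) / 2)
    (hsign : (0 < Real.sin (σ - α) ∧ 0 < Real.sin (σ - β) ∧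
              0 < Real.sin (σ - γ) ∧ 0 < Real.sin (σ - δ)) ∨
             (Real.sin (σ - α) < 0 ∧ Real.sin (σ - β) < 0 ∧
              Real.sin (σ - γ) < 0 ∧ Real.sin (σ - δ) < 0)) :
    σ - α ∈ Set.Ioo 0 Real.pi ∧ σ - β ∈ Set.Ioo 0 Real.pi ∧
    σ - γ ∈ Set.Ioo 0 Real.pi ∧ σ - δ ∈ Set.Ioo 0 Real.pi := by
  obtain ⟨ha1, ha2⟩ := hα
  obtain ⟨hb1, hb2⟩ := hβ
  obtain ⟨hc1, hc2⟩ := hγ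
  obtain ⟨hd1, hd2⟩ := hδ
  have pa : -Real.pi < σ - α := by linarith
  have pb : -Real.pi < σ - β := by linarith
  have pc : -Real.pi < σ - γ := by linarith
  have pd : -Real.pi < σ - δ := by linarith
  have qa : σ - α < 2 * Real.pi := by linarith
  have qb : σ - β < 2 * Real.pi := by linarith
  have qc : σ - γ < 2 * Real.pi := by linarith
  have qd : σ - δ < 2 * Real.pi := by linarith
  rcases hsign with ⟨h1, h2, h3, h4⟩ | ⟨h1, h2, h3, h4⟩
  · exact ⟨sin_pos_helper _ pa qa h1, sin_pos_helper _ pb qb h2,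
      sin_pos_helper _ pc qc h3, sin_pos_helper _ pd qd h4⟩
  · exfalso
    rcases sin_neg_helper _ pa h1 with ka | ka <;>
    rcases sin_neg_helper _ pb h2 with kb | kb <;>
    rcases sin_neg_helper _ pc h3 with kc | kc <;>
    rcases sin_neg_helper _ pd h4 with kd | kd <;>
    linarith
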